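/- Let (Ω, Σ, P) be a probability space, q ≥ 1, and for each i = 1,…,q let (A_{i,j})_{j ∈ I_i} be a finite family of events. Define C_i(ω) = |{j ∈ I_i : ω ∈ A_{i,j}}|, and for k = (k_1,…,k_q) ∈ ℕ^q set S_k = ∑_{J_1 ⊆ I_1, |J_1|=k_1} ⋯ ∑_{J_q ⊆ I_q, |J_q|=k_q} P(⋂_{i=1}^q ⋂_{j ∈ J_i} A_{i,j}), with S_0 = 1. Then for every r = (r_1,…,r_q) ∈ ℕ^q: P(C_1 = r_1, …, C_q = r_q) = ∑_{k_1=r_1}^{|I_1|} ⋯ ∑_{k_q=r_q}^{|I_q|} (-1)^{(k_1-r_1)+⋯+(k_q-r_q)} C(k_1,r_1)⋯C(k_q,r_q) · S_{(k_1,…,k_q)}. -/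

import Mathlib

open MeasureTheory Finset
open scoped Classical

-- univariate binomial identity
lemma uni (c n r : ℕ) (hcn : c ≤ n) :
    ∑ k ∈ Finset.Icc r n, (-1:ℝ)^(k - r) * (k.choose r) * (c.choose k)
      = if c = r then 1 else 0 := by
  by_cases hrc : r ≤ c
  · have hsub : Finset.Icc r c ⊆ Finset.Icc r n := Finset.Icc_subset_Icc_right hcn
    rw [← Finset.sum_subset hsub (by
      intro k hk hk'
      have : c < k := by
        simp only [Finset.mem_Icc] at hk hk'
        omega
      simp [Nat.choose_eq_zero_of_lt this])]
    have : ∀ k ∈ Finset.Icc r c,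
        (-1:ℝ)^(k - r) * (k.choose r) * (c.choose k)
          = (c.choose r : ℝ) * ((-1:ℝ)^(k-r) * ((c-r).choose (k-r))) := by
      intro k hk
      simp only [Finset.mem_Icc] at hk
      have := Nat.choose_mul (n := c) (k := k) (s := r) hk.1
      have h2 : ((c.choose k : ℝ) * (k.choose r : ℝ)) = (c.choose r : ℝ) * ((c-r).choose (k-r)) := by
        exact_mod_cast congrArg (Nat.cast : ℕ → ℝ) this
      calc (-1:ℝ)^(k - r) * (k.choose r) * (c.choose k)
            = (-1:ℝ)^(k-r) * ((c.choose k : ℝ) * (k.choose r)) := by ring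
        _ = (-1:ℝ)^(k-r) * ((c.choose r : ℝ) * ((c-r).choose (k-r))) := by rw [h2]
        _ = (c.choose r : ℝ) * ((-1:ℝ)^(k-r) * ((c-r).choose (k-r))) := by ring
    rw [Finset.sum_congr rfl this, ← Finset.mul_sum]
    have hre : ∑ k ∈ Finset.Icc r c, (-1:ℝ)^(k-r) * ((c-r).choose (k-r))
        = ∑ j ∈ Finset.range (c - r + 1), (-1:ℝ)^j * ((c-r).choose j) := by
      apply Finset.sum_nbij' (fun k => k - r) (fun j => j + r)
      · intro k hk; simp only [Finset.mem_Icc] at hk; simp only [Finset.mem_range]; omega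
      · intro j hj; simp only [Finset.mem_range] at hj; simp only [Finset.mem_Icc]; omega
      · intro k hk; simp only [Finset.mem_Icc] at hk; omega
      · intro j hj; simp only [Finset.mem_range] at hj; omega
      · intro k hk; rfl
    rw [hre]
    have := Int.alternating_sum_range_choose (n := c - r)
    have hr : ∑ j ∈ Finset.range (c - r + 1), (-1:ℝ)^j * ((c-r).choose j)
        = if c - r = 0 then 1 else 0 := by
      exact_mod_cast congrArg (Int.cast : ℤ → ℝ) this
    rw [hr]
    rcases eq_or_ne c r with h | h
    · simp [h]
    · have : c - r ≠ 0 := by omega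
      simp [this, h]
  · have hne : c ≠ r := by omega
    rw [if_neg hne]
    apply Finset.sum_eq_zero
    intro k hk
    simp only [Finset.mem_Icc] at hk
    have : c < k := by omega
    simp [Nat.choose_eq_zero_of_lt this]

lemma count_lemma {Ω : Type} (q : ℕ) (I : Fin q → Type) [∀ i, Fintype (I i)]
    (A : (i : Fin q) → I i → Set Ω) (ω : Ω) (k : Fin q → ℕ) :
    ∑ J ∈ Fintype.piFinset (fun i => (Finset.univ : Finset (I i)).powersetCard (k i)),
        (if ω ∈ ⋂ i, ⋂ j ∈ J i, A i j then (1:ℝ) else 0)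
      = ∏ i, (((Finset.univ.filter fun j => ω ∈ A i j).card).choose (k i) : ℝ) := by
  have h1 : ∀ J : ∀ i, Finset (I i),
      (ω ∈ ⋂ i, ⋂ j ∈ J i, A i j) ↔ ∀ i, J i ⊆ Finset.univ.filter fun j => ω ∈ A i j := by
    intro J
    simp [Set.mem_iInter, Finset.subset_iff]
  calc ∑ J ∈ Fintype.piFinset (fun i => (Finset.univ : Finset (I i)).powersetCard (k i)),
        (if ω ∈ ⋂ i, ⋂ j ∈ J i, A i j then (1:ℝ) else 0)
      = ∑ J ∈ Fintype.piFinset (fun i => (Finset.univ : Finset (I i)).powersetCard (k i)),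
        ∏ i, (if J i ⊆ Finset.univ.filter (fun j => ω ∈ A i j) then (1:ℝ) else 0) := by
        refine Finset.sum_congr rfl fun J _ => ?_
        rw [Finset.prod_boole]
        simp [h1 J]
    _ = ∏ i, ∑ s ∈ (Finset.univ : Finset (I i)).powersetCard (k i),
          (if s ⊆ Finset.univ.filter (fun j => ω ∈ A i j) then (1:ℝ) else 0) :=
        (Finset.prod_univ_sum (fun i => (Finset.univ : Finset (I i)).powersetCard (k i))
          (fun i s => if s ⊆ Finset.univ.filter (fun j => ω ∈ A i j) then (1:ℝ) else 0)).symm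
    _ = ∏ i, (((Finset.univ.filter fun j => ω ∈ A i j).card).choose (k i) : ℝ) := by
        refine Finset.prod_congr rfl fun i _ => ?_
        rw [Finset.sum_boole]
        have : ((Finset.univ : Finset (I i)).powersetCard (k i)).filter
            (fun s => s ⊆ Finset.univ.filter (fun j => ω ∈ A i j))
            = (Finset.univ.filter (fun j => ω ∈ A i j)).powersetCard (k i) := by
          ext s
          simp only [Finset.mem_filter, Finset.mem_powersetCard]
          constructor
          · rintro ⟨⟨-, hc⟩, hs⟩; exact ⟨hs, hc⟩
          · rintro ⟨hs, hc⟩; exact ⟨⟨Finset.subset_univ s, hc⟩, hs⟩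
        rw [this, Finset.card_powersetCard]

theorem stmt_2 {Ω : Type} [MeasurableSpace Ω] (P : Measure Ω) [IsProbabilityMeasure P]
    (q : ℕ) (hq : 1 ≤ q) (I : Fin q → Type) [∀ i, Fintype (I i)]
    (A : (i : Fin q) → I i → Set Ω) (hA : ∀ i j, MeasurableSet (A i j))
    (r : Fin q → ℕ) :
    (P {ω | ∀ i, (Finset.univ.filter fun j => ω ∈ A i j).card = r i}).toReal =
      ∑ k ∈ Fintype.piFinset (fun i => Finset.Icc (r i) (Fintype.card (I i))),
        (-1 : ℝ) ^ (∑ i, (k i - r i)) * (∏ i, ((k i).choose (r i) : ℝ)) *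
          ∑ J ∈ Fintype.piFinset (fun i => (Finset.univ : Finset (I i)).powersetCard (k i)),
            (P (⋂ i, ⋂ j ∈ J i, A i j)).toReal := by
  set S := {ω | ∀ i, (Finset.univ.filter fun j => ω ∈ A i j).card = r i} with hSdef
  -- measurability of the count functions
  have hm : ∀ i, Measurable fun ω => (Finset.univ.filter fun j => ω ∈ A i j).card := by
    intro i
    have : (fun ω => (Finset.univ.filter fun j => ω ∈ A i j).card)
        = fun ω => ∑ j : I i, if ω ∈ A i j then 1 else 0 := by
      funext ω; rw [Finset.card_filter]
    rw [this]
    exact Finset.measurable_sum _ fun j _ =>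
      Measurable.ite (hA i j) measurable_const measurable_const
  have hS : MeasurableSet S := by
    have : S = ⋂ i, (fun ω => (Finset.univ.filter fun j => ω ∈ A i j).card) ⁻¹' {r i} := by
      ext ω; simp [hSdef]
    rw [this]
    exact MeasurableSet.iInter fun i => (hm i) (measurableSet_singleton _)
  have hB : ∀ (J : ∀ i, Finset (I i)), MeasurableSet (⋂ i, ⋂ j ∈ J i, A i j) :=
    fun J => MeasurableSet.iInter fun i => MeasurableSet.iInter fun j =>
      MeasurableSet.iInter fun _ => hA i j
  -- integrability
  have hint : ∀ (J : ∀ i, Finset (I i)),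
      Integrable ((⋂ i, ⋂ j ∈ J i, A i j).indicator (1 : Ω → ℝ)) P :=
    fun J => (integrable_const (1:ℝ)).indicator (hB J)
  -- pointwise identity
  have hpt : ∀ ω, S.indicator (1 : Ω → ℝ) ω =
      ∑ k ∈ Fintype.piFinset (fun i => Finset.Icc (r i) (Fintype.card (I i))),
        (-1 : ℝ) ^ (∑ i, (k i - r i)) * (∏ i, ((k i).choose (r i) : ℝ)) *
          ∑ J ∈ Fintype.piFinset (fun i => (Finset.univ : Finset (I i)).powersetCard (k i)),
            (⋂ i, ⋂ j ∈ J i, A i j).indicator (1 : Ω → ℝ) ω := by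
    intro ω
    set c : Fin q → ℕ := fun i => (Finset.univ.filter fun j => ω ∈ A i j).card with hc
    have step1 : ∀ k : Fin q → ℕ,
        (∑ J ∈ Fintype.piFinset (fun i => (Finset.univ : Finset (I i)).powersetCard (k i)),
            (⋂ i, ⋂ j ∈ J i, A i j).indicator (1 : Ω → ℝ) ω)
          = ∏ i, ((c i).choose (k i) : ℝ) := by
      intro k
      have := count_lemma q I A ω k
      simpa [Set.indicator_apply] using this
    calc S.indicator (1 : Ω → ℝ) ω = if ∀ i, c i = r i then 1 else 0 := by
          simp [Set.indicator_apply, hSdef, hc]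
      _ = ∏ i, (if c i = r i then (1:ℝ) else 0) := by rw [Finset.prod_boole]; simp
      _ = ∏ i, ∑ x ∈ Finset.Icc (r i) (Fintype.card (I i)),
            (-1:ℝ)^(x - r i) * (x.choose (r i)) * ((c i).choose x) := by
          refine Finset.prod_congr rfl fun i _ => ?_
          rw [uni (c i) (Fintype.card (I i)) (r i) (by
            simpa using Finset.card_filter_le (Finset.univ : Finset (I i)) _)]
      _ = ∑ k ∈ Fintype.piFinset (fun i => Finset.Icc (r i) (Fintype.card (I i))),
            ∏ i, ((-1:ℝ)^(k i - r i) * ((k i).choose (r i)) * ((c i).choose (k i))) :=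
          Finset.prod_univ_sum (fun i => Finset.Icc (r i) (Fintype.card (I i)))
            (fun i x => (-1:ℝ)^(x - r i) * (x.choose (r i)) * ((c i).choose x))
      _ = _ := by
          refine Finset.sum_congr rfl fun k _ => ?_
          rw [step1 k, Finset.prod_mul_distrib, Finset.prod_mul_distrib,
            Finset.prod_pow_eq_pow_sum]
  calc (P S).toReal = ∫ ω, S.indicator (1 : Ω → ℝ) ω ∂P := by
        rw [integral_indicator_one hS]; rfl
    _ = ∫ ω, ∑ k ∈ Fintype.piFinset (fun i => Finset.Icc (r i) (Fintype.card (I i))),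
        (-1 : ℝ) ^ (∑ i, (k i - r i)) * (∏ i, ((k i).choose (r i) : ℝ)) *
          ∑ J ∈ Fintype.piFinset (fun i => (Finset.univ : Finset (I i)).powersetCard (k i)),
            (⋂ i, ⋂ j ∈ J i, A i j).indicator (1 : Ω → ℝ) ω ∂P := by
        exact integral_congr_ae (Filter.Eventually.of_forall hpt)
    _ = _ := by
        rw [integral_finset_sum _ (fun k _ =>
          ((integrable_finset_sum _ (fun J _ => hint J)).const_mul _))]
        refine Finset.sum_congr rfl fun k _ => ?_
        rw [integral_const_mul, integral_finset_sum _ (fun J _ => hint J)]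
        congr 1
        exact Finset.sum_congr rfl fun J _ => by rw [integral_indicator_one (hB J)]; rfl
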